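/- Let B be a finite left regular band. Call B connected if for every c ∈ B, any two elements a, b of the contraction B_{≥Bc} := {u ∈ B : Bc ⊆ Bu} are joined by the reflexive–transitive closure of the relation 'u, v ∈ B_{≥Bc} and (v·u = u or u·v = v)' (i.e., the comparability graph, equivalently the Hasse diagram or order complex, of B_{≥Bc} is connected). Then the following are equivalent: (1) B is connected; (2) the semigroup ring ℤB has a two-sided multiplicative identity; (3) for every commutative ring k with unit, the semigroup algebra kB has a two-sided multiplicative identity. -/

import Mathlib

set_option linter.unusedSectionVars false
set_option maxHeartbeats 1000000

def leftIdeal {B : Type*} [Mul B] (a : B) : Set B := {x : B | ∃ y : B, y * a = x}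

namespace Stmt7Aux


open MonoidAlgebra

/-- The comparability relation within the contraction at `c`. -/
def Rel {B : Type*} [Mul B] (c u v : B) : Prop :=
  c * u = c ∧ c * v = c ∧ (v * u = u ∨ u * v = v)

section Semigroup

variable {B : Type*} [Semigroup B]

theorem li_iff (idem : ∀ x : B, x * x = x) {c u : B} :
    leftIdeal c ⊆ leftIdeal u ↔ c * u = c := by
  constructor
  · intro h
    obtain ⟨y, hy⟩ : c ∈ leftIdeal u := h ⟨c, idem c⟩
    calc c * u = y * u * u := by rw [hy]
      _ = y * (u * u) := mul_assoc _ _ _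
      _ = y * u := by rw [idem u]
      _ = c := hy
  · rintro h x ⟨y, hy⟩
    exact ⟨y * c, by rw [mul_assoc, h, hy]⟩

theorem absorb (lrb : ∀ x y : B, x * y * x = x * y) {b u : B} (h : b * u = b) (x : B) :
    (b * x) * u = b * x := by
  have h2 : ((b * u) * x) * u = (b * u) * x := by
    calc ((b * u) * x) * u = b * ((u * x) * u) := by simp only [mul_assoc]
      _ = b * (u * x) := by rw [lrb]
      _ = (b * u) * x := by rw [mul_assoc]
  rw [h] at h2; exact h2

theorem sat_left (lrb : ∀ x y : B, x * y * x = x * y) {u x y : B} (h : u * (x * y) = u) :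
    u * x = u := by
  calc u * x = (u * (x * y)) * x := by rw [h]
    _ = u * ((x * y) * x) := mul_assoc _ _ _
    _ = u * (x * y) := by rw [lrb]
    _ = u := h

theorem sat_right (idem : ∀ x : B, x * x = x) {u x y : B} (h : u * (x * y) = u) :
    u * y = u := by
  calc u * y = (u * (x * y)) * y := by rw [h]
    _ = u * (x * (y * y)) := by simp only [mul_assoc]
    _ = u * (x * y) := by rw [idem]
    _ = u := h

theorem foldl_absorb (lrb : ∀ x y : B, x * y * x = x * y) :
    ∀ (l : List B) (b u : B), b * u = b → (l.foldl (· * ·) b) * u = l.foldl (· * ·) b := by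
  intro l
  induction l with
  | nil => intro b u h; simpa using h
  | cons hd t ih =>
      intro b u h
      simpa using ih (b * hd) u (absorb lrb h hd)

theorem foldl_mem (idem : ∀ x : B, x * x = x) (lrb : ∀ x y : B, x * y * x = x * y) :
    ∀ (l : List B) (b u : B), u ∈ l → (l.foldl (· * ·) b) * u = l.foldl (· * ·) b := by
  intro l
  induction l with
  | nil => intro b u h; simp at h
  | cons hd t ih =>
      intro b u h
      rcases List.mem_cons.mp h with rfl | h
      · simp only [List.foldl_cons]
        exact foldl_absorb lrb t (b * u) u (by rw [mul_assoc, idem])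
      · simpa using ih (b * hd) u h

end Semigroup



open MonoidAlgebra

variable {k : Type*} [CommRing k] {B : Type*} [Semigroup B]

/-- pull a scalar out of a left factor -/
theorem single_mul_scale (b : B) (c : k) (f : MonoidAlgebra k B) :
    single b c * f = c • (single b (1 : k) * f) := by
  induction f using MonoidAlgebra.induction_linear with
  | zero => simp
  | add f g hf hg => simp only [mul_add, hf, hg, smul_add]
  | single a v =>
      simp [single_mul_single, MonoidAlgebra.smul_single']

theorem mul_single_scale (b : B) (c : k) (f : MonoidAlgebra k B) :
    f * single b c = c • (f * single b (1 : k)) := by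
  induction f using MonoidAlgebra.induction_linear with
  | zero => simp
  | add f g hf hg => simp only [add_mul, hf, hg, smul_add]
  | single a v =>
      simp [single_mul_single, MonoidAlgebra.smul_single', mul_comm c v]

theorem mul_single_apply [Fintype B] [DecidableEq B] (f : MonoidAlgebra k B) (y v : B) :
    (f * single y (1 : k)).coeff v = ∑ a : B, if a * y = v then f.coeff a else 0 := by
  rw [MonoidAlgebra.mul_apply]
  have h1 : (f.coeff.sum fun a₁ b₁ => (single y (1:k)).coeff.sum fun a₂ b₂ =>
      if a₁ * a₂ = v then b₁ * b₂ else 0) = f.coeff.sum fun a₁ b₁ => if a₁ * y = v then b₁ else 0 := by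
    refine Finsupp.sum_congr fun a₁ _ => ?_
    rw [coeff_single, Finsupp.sum_single_index (by simp)]
    simp
  rw [h1, Finsupp.sum_fintype _ _ (fun a => by simp)]

theorem lrb_single (lrb : ∀ x y : B, x * y * x = x * y) (h : B) (f : MonoidAlgebra k B) :
    (single h (1 : k) * f) * single h 1 = single h (1 : k) * f := by
  induction f using MonoidAlgebra.induction_linear with
  | zero => simp
  | add f g hf hg => simp only [mul_add, add_mul, hf, hg]
  | single a v =>
      rw [single_mul_single, single_mul_single, one_mul, mul_one, lrb]

/-- the augmentation (sum of coefficients) -/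
noncomputable def aug [Fintype B] (f : MonoidAlgebra k B) : k := ∑ w : B, f.coeff w

theorem aug_zero [Fintype B] : aug (0 : MonoidAlgebra k B) = 0 := by simp [aug]

theorem aug_add [Fintype B] (f g : MonoidAlgebra k B) : aug (f + g) = aug f + aug g := by
  have h : ∀ w : B, (f + g).coeff w = f.coeff w + g.coeff w := fun w => rfl
  simp only [aug, h, Finset.sum_add_distrib]

theorem aug_single [Fintype B] (b : B) (c : k) : aug (single b c : MonoidAlgebra k B) = c := by
  classical
  simp [aug, coeff_single, Finsupp.single_apply]

theorem aug_mul_single [Fintype B] (f : MonoidAlgebra k B) (y : B) :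
    aug (f * single y (1 : k)) = aug f := by
  classical
  unfold aug
  have : ∀ v : B, (f * single y (1:k)).coeff v = ∑ a : B, if a * y = v then f.coeff a else 0 :=
    fun v => mul_single_apply f y v
  simp only [this]
  rw [Finset.sum_comm]
  refine Finset.sum_congr rfl fun a _ => ?_
  simp [Finset.sum_ite_eq]

/-- the fold producing a right identity -/
noncomputable def rho : List B → MonoidAlgebra k B :=
  List.foldr (fun h acc => acc + single h 1 - acc * single h 1) 0

theorem rho_right_id (idem : ∀ x : B, x * x = x) (lrb : ∀ x y : B, x * y * x = x * y) :
    ∀ (l : List B) (b : B), b ∈ l → single b (1 : k) * rho l = single b 1 := by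
  intro l
  induction l with
  | nil => intro b h; simp at h
  | cons hd t ih =>
      intro b h
      have hrho : rho (hd :: t) = rho t + single hd 1 - rho t * single hd (1:k) := rfl
      rw [hrho, mul_sub, mul_add, ← mul_assoc]
      rcases List.mem_cons.mp h with rfl | h
      · rw [lrb_single lrb, single_mul_single, one_mul, idem]
        abel
      · rw [ih b h, single_mul_single, one_mul]
        abel

theorem aug_neg [Fintype B] (f : MonoidAlgebra k B) : aug (-f) = - aug f := by
  have h : ∀ w : B, (-f).coeff w = -(f.coeff w) := fun w => rfl
  simp only [aug, h, Finset.sum_neg_distrib]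

theorem aug_rho [Fintype B] (hd : B) (t : List B) : aug (rho (hd :: t) : MonoidAlgebra k B) = 1 := by
  have hrho : (rho (hd :: t) : MonoidAlgebra k B)
      = rho t + single hd 1 - rho t * single hd (1:k) := rfl
  rw [hrho, sub_eq_add_neg, aug_add, aug_add, aug_single, aug_neg, aug_mul_single]
  ring



open MonoidAlgebra

variable {k : Type*} [CommRing k] {B : Type*} [Semigroup B] [Fintype B]

theorem sum_over_subtype {S : Subsemigroup B} [DecidablePred (· ∈ S)] (F : B → k)
    (hF : ∀ a, a ∉ S → F a = 0) : ∑ a : B, F a = ∑ s : S, F s.1 := by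
  rw [← Finset.sum_subtype (Finset.univ.filter (· ∈ S))
    (fun x => by simp [Finset.mem_filter]) F]
  refine (Finset.sum_subset (Finset.filter_subset _ _) ?_).symm
  intro x _ hx
  exact hF x (by simpa using hx)

noncomputable def Phi (S : Subsemigroup B) (f : MonoidAlgebra k B) : MonoidAlgebra k S :=
  MonoidAlgebra.ofCoeff (Finsupp.comapDomain (Subtype.val : S → B) f.coeff (Subtype.val_injective.injOn))

theorem Phi_apply (S : Subsemigroup B) (f : MonoidAlgebra k B) (s : S) :
    (Phi S f).coeff s = f.coeff s.1 := rfl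

theorem Phi_single (S : Subsemigroup B) (b : B) (c : k) (hb : b ∈ S) :
    Phi S (single b c) = single (⟨b, hb⟩ : S) c := by
  classical
  apply MonoidAlgebra.ext
  apply Finsupp.ext
  intro s
  rw [Phi_apply]
  simp only [coeff_single, Finsupp.single_apply]
  by_cases h : (⟨b, hb⟩ : S) = s
  · rw [if_pos h, if_pos (by exact congrArg Subtype.val h)]
  · rw [if_neg h, if_neg (fun hh => h (Subtype.ext hh))]

theorem Phi_mul (S : Subsemigroup B)
    (hsat : ∀ x y : B, x * y ∈ S → x ∈ S ∧ y ∈ S)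
    (f g : MonoidAlgebra k B) : Phi S (f * g) = Phi S f * Phi S g := by
  classical
  apply MonoidAlgebra.ext
  apply Finsupp.ext
  intro s
  rw [Phi_apply, MonoidAlgebra.mul_apply, MonoidAlgebra.mul_apply]
  have expand : ∀ {α : Type _} [Fintype α] [Mul α] [DecidableEq α]
      (F G : MonoidAlgebra k α) (x : α),
      (F.coeff.sum fun a₁ b₁ => G.coeff.sum fun a₂ b₂ => if a₁ * a₂ = x then b₁ * b₂ else 0)
        = ∑ a₁ : α, ∑ a₂ : α, if a₁ * a₂ = x then F.coeff a₁ * G.coeff a₂ else 0 := by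
    intro α _ _ _ F G x
    rw [Finsupp.sum_fintype _ _ (fun a => by simp)]
    refine Finset.sum_congr rfl fun a₁ _ => ?_
    rw [Finsupp.sum_fintype _ _ (fun a => by simp)]
  rw [expand, expand]
  have step1 : ∑ a₁ : B, ∑ a₂ : B, (if a₁ * a₂ = s.1 then f.coeff a₁ * g.coeff a₂ else 0)
      = ∑ s₁ : S, ∑ a₂ : B, (if s₁.1 * a₂ = s.1 then f.coeff s₁.1 * g.coeff a₂ else 0) := by
    refine sum_over_subtype _ (fun a ha => ?_)
    refine Finset.sum_eq_zero fun a₂ _ => ?_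
    rw [if_neg]
    intro hh
    exact ha (hsat a a₂ (hh ▸ s.2)).1
  rw [step1]
  refine Finset.sum_congr rfl fun s₁ _ => ?_
  have step2 : ∑ a₂ : B, (if s₁.1 * a₂ = s.1 then f.coeff s₁.1 * g.coeff a₂ else 0)
      = ∑ s₂ : S, (if s₁.1 * s₂.1 = s.1 then f.coeff s₁.1 * g.coeff s₂.1 else 0) := by
    refine sum_over_subtype _ (fun a ha => ?_)
    rw [if_neg]
    intro hh
    exact ha (hsat s₁.1 a (hh ▸ s.2)).2
  rw [step2]
  refine Finset.sum_congr rfl fun s₂ _ => ?_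
  have hc : (s₁.1 * s₂.1 = s.1) = (s₁ * s₂ = s) := by
    simp only [eq_iff_iff]
    exact ⟨fun h => Subtype.ext h, fun h => congrArg Subtype.val h⟩
  rw [hc]
  split <;> rfl


section Ext

variable {k : Type*} [CommRing k] {B : Type*} [Semigroup B]

theorem ext_right_id (F : MonoidAlgebra k B)
    (h : ∀ b : B, single b (1 : k) * F = single b 1) :
    ∀ x : MonoidAlgebra k B, x * F = x := by
  intro x
  induction x using MonoidAlgebra.induction_linear with
  | zero => simp
  | add f g hf hg => rw [add_mul, hf, hg]
  | single b c => rw [single_mul_scale, h b, MonoidAlgebra.smul_single', mul_one]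

theorem lift_path (S : Subsemigroup B) (c' : ↥S)
    (hmem : ∀ w : B, c'.1 * w = c'.1 → w ∈ S) :
    ∀ (x y : B) (hx : x ∈ S) (hy : y ∈ S),
      Relation.ReflTransGen (Rel c'.1) x y →
      Relation.ReflTransGen (Rel c') (⟨x, hx⟩ : ↥S) ⟨y, hy⟩ := by
  intro x y hx hy h
  revert hy
  induction h with
  | refl => intro hy; exact Relation.ReflTransGen.refl
  | @tail m w hst hrel ihp =>
      intro hy
      obtain ⟨hcu, hcv, hor⟩ := hrel
      have hm : m ∈ S := hmem m hcu
      refine Relation.ReflTransGen.tail (ihp hm) ⟨Subtype.ext hcu, Subtype.ext hcv, ?_⟩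
      rcases hor with h | h
      · exact Or.inl (Subtype.ext h)
      · exact Or.inr (Subtype.ext h)

end Ext

universe u₁ u₂

theorem auxA (k : Type u₁) [CommRing k] :
    ∀ (n : ℕ) (B : Type u₂) [Semigroup B] [Fintype B],
      (∀ x : B, x * x = x) → (∀ x y : B, x * y * x = x * y) →
      (∀ c a b : B, c * a = c → c * b = c → Relation.ReflTransGen (Rel c) a b) →
      Fintype.card B ≤ n →
      ∃ η : MonoidAlgebra k B, ∀ x : MonoidAlgebra k B, η * x = x ∧ x * η = x := by
  intro n
  induction n with
  | zero =>
      intro B _ _ _ _ _ hcard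
      have hemp : IsEmpty B := Fintype.card_eq_zero_iff.mp (Nat.le_zero.mp hcard)
      have hall : ∀ x : MonoidAlgebra k B, x = 0 := fun x => MonoidAlgebra.ext (Finsupp.ext fun a => hemp.elim a)
      exact ⟨0, fun x => by rw [hall x]; simp⟩
  | succ n ih =>
      intro B instS instF idem lrb conn hcard
      classical
      by_cases hne : Nonempty B
      swap
      · have hemp : IsEmpty B := not_nonempty_iff.mp hne
        have hall : ∀ x : MonoidAlgebra k B, x = 0 := fun x => MonoidAlgebra.ext (Finsupp.ext fun a => hemp.elim a)
        exact ⟨0, fun x => by rw [hall x]; simp⟩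
      obtain ⟨a₀⟩ := hne
      have hl : ∀ u : B, u ∈ (Finset.univ : Finset B).toList :=
        fun u => Finset.mem_toList.mpr (Finset.mem_univ u)
      set l : List B := (Finset.univ : Finset B).toList with hldef
      set z : B := l.foldl (· * ·) a₀ with hzdef
      have hz : ∀ u : B, z * u = z := fun u => foldl_mem idem lrb l a₀ u (hl u)
      set η : MonoidAlgebra k B := rho l with hηdef
      have P1b : ∀ b : B, single b (1:k) * η = single b 1 :=
        fun b => rho_right_id idem lrb l b (hl b)
      have P1 : ∀ x : MonoidAlgebra k B, x * η = x := ext_right_id η P1b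
      have P2 : aug η = 1 := by
        obtain ⟨hd, t, hlt⟩ : ∃ hd t, l = hd :: t := by
          cases hcons : l with
          | nil => exfalso; have h0 := hl a₀; rw [hcons] at h0; simp at h0
          | cons hd t => exact ⟨hd, t, rfl⟩
        rw [hηdef, hlt]; exact aug_rho hd t
      have key : ∀ u : B, ¬ (u * z = u) → ∀ b : B,
          (η * single b (1:k)).coeff u = (single b (1:k) : MonoidAlgebra k B).coeff u := by
        intro u hu b
        set S : Subsemigroup B :=
          { carrier := {v | u * v = u},
            mul_mem' := fun {x y} hx hy => by
              simp only [Set.mem_setOf_eq] at *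
              rw [← mul_assoc, hx, hy] } with hSdef
        have hmemS : ∀ v : B, v ∈ S ↔ u * v = u := fun v => Iff.rfl
        have hsat : ∀ x y : B, x * y ∈ S → x ∈ S ∧ y ∈ S := fun x y h =>
          ⟨(hmemS x).mpr (sat_left lrb ((hmemS _).mp h)),
           (hmemS y).mpr (sat_right idem ((hmemS _).mp h))⟩
        have idemS : ∀ x : ↥S, x * x = x := fun x => Subtype.ext (idem x.1)
        have lrbS : ∀ x y : ↥S, x * y * x = x * y := fun x y => Subtype.ext (lrb x.1 y.1)
        have connS : ∀ c' a' b' : ↥S, c' * a' = c' → c' * b' = c' →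
            Relation.ReflTransGen (Rel c') a' b' := by
          intro c' a' b' h1 h2
          have h1' : c'.1 * a'.1 = c'.1 := congrArg Subtype.val h1
          have h2' : c'.1 * b'.1 = c'.1 := congrArg Subtype.val h2
          have hpath := conn c'.1 a'.1 b'.1 h1' h2'
          have hmemw : ∀ w : B, c'.1 * w = c'.1 → w ∈ S := by
            intro w hw
            have hc : u * c'.1 = u := (hmemS _).mp c'.2
            refine (hmemS w).mpr ?_
            calc u * w = (u * c'.1) * w := by rw [hc]
              _ = u * (c'.1 * w) := mul_assoc _ _ _
              _ = u * c'.1 := by rw [hw]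
              _ = u := hc
          exact lift_path S c' hmemw a'.1 b'.1 a'.2 b'.2 hpath
        have hzS : z ∉ S := fun h => hu ((hmemS z).mp h)
        have cardS : Fintype.card ↥S ≤ n := by
          have hlt : Fintype.card ↥S < Fintype.card B :=
            Fintype.card_subtype_lt (p := fun v => v ∈ S) (x := z) hzS
          omega
        obtain ⟨η', hη'⟩ := ih ↥S idemS lrbS connS cardS
        have hΦmul := Phi_mul (k := k) S hsat
        have hrid : ∀ s : ↥S, single s (1:k) * Phi S η = single s 1 := by
          intro s
          have h := congrArg (Phi S) (P1b s.1)
          rw [hΦmul, Phi_single S s.1 1 s.2] at h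
          exact h
        have hΦη : Phi S η = η' := by
          have h1 : η' * Phi S η = Phi S η := (hη' (Phi S η)).1
          have h2 : η' * Phi S η = η' := ext_right_id (Phi S η) hrid η'
          rw [← h1, h2]
        have hu_mem : u ∈ S := (hmemS u).mpr (idem u)
        have e0 : (η * single b (1:k)).coeff u = (Phi S (η * single b 1)).coeff ⟨u, hu_mem⟩ := rfl
        have e1 : Phi S (η * single b (1:k)) = Phi S (single b 1) := by
          rw [hΦmul, hΦη, (hη' (Phi S (single b 1))).1]
        rw [e0, e1]
        rfl
      set γ : B → MonoidAlgebra k B := fun b => η * single b 1 - single b 1 with hγdef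
      have hγapp : ∀ b v : B, ¬ (v * z = v) → (γ b).coeff v = 0 := by
        intro b v hv
        have h : (γ b).coeff v
            = (η * single b 1 : MonoidAlgebra k B).coeff v - (single b (1:k) : MonoidAlgebra k B).coeff v := rfl
        rw [h, key v hv b, sub_self]
      have hηsb : ∀ b : B, η * single b (1:k) = single b 1 + γ b := by
        intro b; simp only [hγdef]; abel
      have hγabsorb : ∀ b y : B, γ b * single y (1:k) = γ b := by
        intro b y
        apply MonoidAlgebra.ext; apply Finsupp.ext; intro v
        rw [mul_single_apply]
        have hstep : ∀ a : B, (if a * y = v then (γ b).coeff a else 0) = (if a = v then (γ b).coeff a else 0) := by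
          intro a
          by_cases hpa : a * z = a
          · have hay : a * y = a := by
              calc a * y = (a * z) * y := by rw [hpa]
                _ = a * (z * y) := mul_assoc _ _ _
                _ = a * z := by rw [hz y]
                _ = a := hpa
            rw [hay]
          · rw [hγapp b a hpa]; simp
        rw [Finset.sum_congr rfl (fun a _ => hstep a), Finset.sum_ite_eq' Finset.univ v (γ b).coeff]
        simp
      have hγmul : ∀ b y : B, γ (b * y) = γ b := by
        intro b y
        have h1 : (single (b * y) (1:k) : MonoidAlgebra k B) = single b 1 * single y 1 := by
          rw [single_mul_single, one_mul]
        have h2 : γ (b * y) = (η * single b 1) * single y 1 - single b 1 * single y 1 := by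
          simp only [hγdef]
          rw [h1, ← mul_assoc]
        rw [hηsb b, add_mul, hγabsorb b y] at h2
        rw [h2]; abel
      have hγconst : ∀ a b : B, γ a = γ b := by
        have main : ∀ a v : B, Relation.ReflTransGen (Rel z) a v → γ a = γ v := by
          intro a v h
          induction h with
          | refl => rfl
          | @tail m w hst hrel ihp =>
              obtain ⟨_, _, hor⟩ := hrel
              rcases hor with h | h
              · have hmw : γ m = γ w := by rw [← h]; exact hγmul w m
                exact ihp.trans hmw
              · have hwm : γ w = γ m := by rw [← h]; exact hγmul m w
                exact ihp.trans hwm.symm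
        intro a b; exact main a b (conn z a b (hz a) (hz b))
      have master : ∀ g : MonoidAlgebra k B, η * g = g + (aug g) • γ z := by
        intro g
        induction g using MonoidAlgebra.induction_linear with
        | zero => simp [aug_zero]
        | add f g hf hg => rw [mul_add, hf, hg, aug_add, add_smul]; abel
        | single b c =>
            rw [mul_single_scale, hηsb b, hγconst b z, aug_single, smul_add,
              MonoidAlgebra.smul_single', mul_one]
      have hΓ : γ z = 0 := by
        have h1 := master η
        rw [P1 η, P2, one_smul] at h1
        exact (left_eq_add.mp h1)
      refine ⟨η, fun x => ⟨?_, P1 x⟩⟩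
      rw [master x, hΓ, smul_zero, add_zero]

theorem auxB {k : Type*} [CommRing k] [Nontrivial k] {B : Type*} [Semigroup B] [Fintype B]
    (idem : ∀ x : B, x * x = x) (lrb : ∀ x y : B, x * y * x = x * y)
    (η : MonoidAlgebra k B) (hη : ∀ x : MonoidAlgebra k B, η * x = x)
    (c a b : B) (ha : c * a = c) (hb : c * b = c) :
    Relation.ReflTransGen (Rel c) a b := by
  classical
  set T : B → Prop := fun u => c * u = c ∧ Relation.ReflTransGen (Rel c) a u with hTdef
  have hTstep : ∀ x p : B, c * p = c → (T (x * p) ↔ T x) := by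
    intro x p hp
    constructor
    · rintro ⟨h1, h2⟩
      have hq : (x * p) * x = x * p := lrb x p
      have hcx : c * x = c := by
        calc c * x = (c * (x * p)) * x := by rw [h1]
          _ = c * ((x * p) * x) := mul_assoc _ _ _
          _ = c * (x * p) := by rw [hq]
          _ = c := h1
      refine ⟨hcx, h2.tail ⟨h1, hcx, Or.inl ?_⟩⟩
      rw [← mul_assoc, idem x]
    · rintro ⟨h1, h2⟩
      have hcxp : c * (x * p) = c := by rw [← mul_assoc, h1, hp]
      refine ⟨hcxp, h2.tail ⟨h1, hcxp, Or.inr ?_⟩⟩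
      rw [← mul_assoc, idem x]
  set F : MonoidAlgebra k B → k := fun f => ∑ w : B, if T w then f.coeff w else 0 with hFdef
  have hF : ∀ p : B, c * p = c →
      F (η * single p 1) = ∑ x : B, (if T x then η.coeff x else 0) := by
    intro p hp
    have e1 : F (η * single p 1)
        = ∑ w : B, if T w then (∑ x : B, if x * p = w then η.coeff x else 0) else 0 := by
      simp only [hFdef]
      refine Finset.sum_congr rfl fun w _ => ?_
      rw [mul_single_apply]
    rw [e1]
    have e2 : ∀ w : B, (if T w then (∑ x : B, if x * p = w then η.coeff x else 0) else 0)
        = ∑ x : B, if x * p = w then (if T w then η.coeff x else 0) else 0 := by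
      intro w
      by_cases hw : T w
      · rw [if_pos hw]
        refine Finset.sum_congr rfl fun x _ => ?_
        rw [if_pos hw]
      · rw [if_neg hw]
        refine (Finset.sum_eq_zero fun x _ => ?_).symm
        rw [if_neg hw]
        simp
    rw [Finset.sum_congr rfl fun w _ => e2 w, Finset.sum_comm]
    refine Finset.sum_congr rfl fun x _ => ?_
    rw [Finset.sum_ite_eq Finset.univ (x * p) (fun w => if T w then η.coeff x else 0),
      if_pos (Finset.mem_univ _)]
    by_cases h : T x
    · rw [if_pos ((hTstep x p hp).mpr h), if_pos h]
    · rw [if_neg (fun hh => h ((hTstep x p hp).mp hh)), if_neg h]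
  have hFs : ∀ p : B, F (single p (1:k)) = if T p then 1 else 0 := by
    intro p
    simp only [hFdef]
    have e : ∀ w : B, (if T w then (single p (1:k) : MonoidAlgebra k B).coeff w else 0)
        = if p = w then (if T w then 1 else 0) else 0 := by
      intro w
      by_cases hw : T w
      · rw [if_pos hw, if_pos hw]
        simp [coeff_single, Finsupp.single_apply]
      · rw [if_neg hw, if_neg hw]
        simp
    rw [Finset.sum_congr rfl fun w _ => e w,
      Finset.sum_ite_eq Finset.univ p (fun w => if T w then (1:k) else 0),
      if_pos (Finset.mem_univ _)]
  have hTa : T a := ⟨ha, Relation.ReflTransGen.refl⟩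
  have e1 : (1 : k) = ∑ x : B, (if T x then η.coeff x else 0) := by
    have := hF a ha
    rw [hη (single a 1), hFs a, if_pos hTa] at this
    exact this
  have e2 : (if T b then (1:k) else 0) = ∑ x : B, (if T x then η.coeff x else 0) := by
    have := hF b hb
    rw [hη (single b 1), hFs b] at this
    exact this
  by_cases hTb : T b
  · exact hTb.2
  · rw [if_neg hTb] at e2
    exact absurd (e1.trans e2.symm) one_ne_zero

end Stmt7Aux

/-- A finite left regular band `B` is connected (every contraction `B_{≥Bc}` has a
connected comparability graph) iff `ℤB` is unital, iff `kB` is unital for every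
commutative ring `k`. -/
theorem stmt7 {B : Type*} [Semigroup B] [Fintype B]
    (idem : ∀ x : B, x * x = x) (lrb : ∀ x y : B, x * y * x = x * y) :
    ((∀ c : B, ∀ a ∈ {u : B | leftIdeal c ⊆ leftIdeal u},
        ∀ b ∈ {u : B | leftIdeal c ⊆ leftIdeal u},
          Relation.ReflTransGen
            (fun u v : B => u ∈ {w : B | leftIdeal c ⊆ leftIdeal w} ∧
              v ∈ {w : B | leftIdeal c ⊆ leftIdeal w} ∧ (v * u = u ∨ u * v = v)) a b) ↔
      (∃ η : MonoidAlgebra ℤ B, ∀ x : MonoidAlgebra ℤ B, η * x = x ∧ x * η = x)) ∧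
    ((∀ c : B, ∀ a ∈ {u : B | leftIdeal c ⊆ leftIdeal u},
        ∀ b ∈ {u : B | leftIdeal c ⊆ leftIdeal u},
          Relation.ReflTransGen
            (fun u v : B => u ∈ {w : B | leftIdeal c ⊆ leftIdeal w} ∧
              v ∈ {w : B | leftIdeal c ⊆ leftIdeal w} ∧ (v * u = u ∨ u * v = v)) a b) ↔
      (∀ (k : Type*) [CommRing k],
        ∃ η : MonoidAlgebra k B, ∀ x : MonoidAlgebra k B, η * x = x ∧ x * η = x)) := by
  have liff : ∀ c u : B, (leftIdeal c ⊆ leftIdeal u) ↔ c * u = c :=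
    fun c u => Stmt7Aux.li_iff idem
  have hrel : ∀ c : B, (fun u v : B => u ∈ {w : B | leftIdeal c ⊆ leftIdeal w} ∧
      v ∈ {w : B | leftIdeal c ⊆ leftIdeal w} ∧ (v * u = u ∨ u * v = v)) = Stmt7Aux.Rel c := by
    intro c
    funext u v
    rw [eq_iff_iff]
    simp only [Set.mem_setOf_eq, Stmt7Aux.Rel]
    rw [liff c u, liff c v]
  have hconv : (∀ c : B, ∀ a ∈ {u : B | leftIdeal c ⊆ leftIdeal u},
        ∀ b ∈ {u : B | leftIdeal c ⊆ leftIdeal u},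
          Relation.ReflTransGen
            (fun u v : B => u ∈ {w : B | leftIdeal c ⊆ leftIdeal w} ∧
              v ∈ {w : B | leftIdeal c ⊆ leftIdeal w} ∧ (v * u = u ∨ u * v = v)) a b)
      ↔ (∀ c a b : B, c * a = c → c * b = c →
          Relation.ReflTransGen (Stmt7Aux.Rel c) a b) := by
    constructor
    · intro H c a b ha hb
      have h := H c a ((liff c a).mpr ha) b ((liff c b).mpr hb)
      rwa [hrel c] at h
    · intro H c a ha b hb
      rw [hrel c]
      exact H c a b ((liff c a).mp ha) ((liff c b).mp hb)
  constructor
  · rw [hconv]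
    constructor
    · intro H
      exact Stmt7Aux.auxA ℤ (Fintype.card B) B idem lrb H le_rfl
    · rintro ⟨η, hη⟩ c a b ha hb
      exact Stmt7Aux.auxB idem lrb η (fun x => (hη x).1) c a b ha hb
  · rw [hconv]
    constructor
    · intro H k _
      exact Stmt7Aux.auxA k (Fintype.card B) B idem lrb H le_rfl
    · intro H c a b ha hb
      obtain ⟨η, hη⟩ := H (ULift ℤ)
      exact Stmt7Aux.auxB idem lrb η (fun x => (hη x).1) c a b ha hb
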